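/- Let V*_τ and V*_{τ'} denote the unique fixed points of the expectile Bellman operators T_τ and T_{τ'} respectively. If τ' ≥ τ with τ, τ' ∈ (0,1), then V*_{τ'}(s) ≥ V*_τ(s) for every state s. -/
import Mathlib


open Finset

private lemma g_mono_tau {τ τ' : ℝ} (h : τ ≤ τ') (t : ℝ) :
    τ * max t 0 + (1 - τ) * min t 0 ≤ τ' * max t 0 + (1 - τ') * min t 0 := by
  nlinarith [le_max_right t 0, min_le_right t 0]

private lemma g_lip {τ' : ℝ} (h0 : 0 < τ') (h1 : τ' < 1) {x y : ℝ} (hxy : x ≤ y) :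
    min τ' (1 - τ') * (y - x) ≤
      (τ' * max y 0 + (1 - τ') * min y 0) - (τ' * max x 0 + (1 - τ') * min x 0) := by
  have hl := min_le_left τ' (1 - τ')
  have hr := min_le_right τ' (1 - τ')
  rcases le_total x 0 with hx | hx <;> rcases le_total y 0 with hy | hy
  · rw [max_eq_right hx, min_eq_left hx, max_eq_right hy, min_eq_left hy]; nlinarith
  · rw [max_eq_right hx, min_eq_left hx, max_eq_left hy, min_eq_right hy]; nlinarith
  · rw [max_eq_left hx, min_eq_right hx, max_eq_right hy, min_eq_left hy]; nlinarith
  · rw [max_eq_left hx, min_eq_right hx, max_eq_left hy, min_eq_right hy]; nlinarith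

/-- If `V*_τ` and `V*_{τ'}` are the (unique) fixed points of the
expectile Bellman operators `T_τ` and `T_{τ'}` and `τ' ≥ τ`, then
`V*_{τ'}(s) ≥ V*_τ(s)` for every state `s`. -/
theorem expectile_fixed_point_monotone {S A : Type*}
    [Fintype S] [Nonempty S] [Fintype A] [Nonempty A]
    (pol : S → A → ℝ) (P : S → A → S → ℝ) (R : S → A → S → ℝ) (γ α τ τ' : ℝ)
    (hpol0 : ∀ s a, 0 ≤ pol s a) (hpol1 : ∀ s, ∑ a, pol s a = 1)
    (hP0 : ∀ s a s', 0 ≤ P s a s') (hP1 : ∀ s a, ∑ s', P s a s' = 1)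
    (hγ0 : 0 ≤ γ) (hγ1 : γ < 1)
    (hτ0 : 0 < τ) (hτ1 : τ < 1) (hτ'0 : 0 < τ') (hτ'1 : τ' < 1) (hττ' : τ ≤ τ')
    (hα0 : 0 < α) (hα : 2 * α * max τ (1 - τ) ≤ 1) (hα' : 2 * α * max τ' (1 - τ') ≤ 1)
    (Tτ Tτ' : (S → ℝ) → (S → ℝ))
    (hTτ : ∀ V s, Tτ V s =
      V s + 2 * α * ∑ a, ∑ s', pol s a * P s a s' *
        (τ * max (R s a s' + γ * V s' - V s) 0
          + (1 - τ) * min (R s a s' + γ * V s' - V s) 0))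
    (hTτ' : ∀ V s, Tτ' V s =
      V s + 2 * α * ∑ a, ∑ s', pol s a * P s a s' *
        (τ' * max (R s a s' + γ * V s' - V s) 0
          + (1 - τ') * min (R s a s' + γ * V s' - V s) 0))
    (Vτ Vτ' : S → ℝ) (hfix : Tτ Vτ = Vτ) (hfix' : Tτ' Vτ' = Vτ') :
    ∀ s, Vτ s ≤ Vτ' s := by
  obtain ⟨s₀, -, hmax⟩ := Finset.exists_max_image Finset.univ (fun s => Vτ s - Vτ' s)
    ⟨Classical.arbitrary S, Finset.mem_univ _⟩
  simp only [Finset.mem_univ, forall_const] at hmax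
  set M := Vτ s₀ - Vτ' s₀ with hMdef
  suffices hkey : M ≤ 0 by
    intro s; have := hmax s; linarith
  by_contra hMpos
  push_neg at hMpos
  -- the expectile correction vanishes at any fixed point
  have hzero : ∀ (σ : ℝ) (T : (S → ℝ) → (S → ℝ)) (V : S → ℝ),
      (∀ W s, T W s = W s + 2 * α * ∑ a, ∑ s', pol s a * P s a s' *
        (σ * max (R s a s' + γ * W s' - W s) 0
          + (1 - σ) * min (R s a s' + γ * W s' - W s) 0)) → T V = V →
      ∑ a, ∑ s', pol s₀ a * P s₀ a s' *
        (σ * max (R s₀ a s' + γ * V s' - V s₀) 0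
          + (1 - σ) * min (R s₀ a s' + γ * V s' - V s₀) 0) = 0 := by
    intro σ T V hT hfixV
    have h1 := hT V s₀
    rw [hfixV] at h1
    have h2 : 2 * α * ∑ a, ∑ s', pol s₀ a * P s₀ a s' *
        (σ * max (R s₀ a s' + γ * V s' - V s₀) 0
          + (1 - σ) * min (R s₀ a s' + γ * V s' - V s₀) 0) = 0 := by linarith
    have h2α : (2 : ℝ) * α ≠ 0 := by positivity
    exact (mul_eq_zero.mp h2).resolve_left h2α
  have hS1 := hzero τ Tτ Vτ hTτ hfix
  have hS2 := hzero τ' Tτ' Vτ' hTτ' hfix'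
  set m := min τ' (1 - τ') with hmdef
  have hm : 0 < m := lt_min hτ'0 (by linarith)
  set c := m * ((1 - γ) * M) with hcdef
  have hc : 0 < c := mul_pos hm (mul_pos (by linarith) hMpos)
  -- per-term comparison
  have step : ∑ a, ∑ s', pol s₀ a * P s₀ a s' *
        ((τ * max (R s₀ a s' + γ * Vτ s' - Vτ s₀) 0
          + (1 - τ) * min (R s₀ a s' + γ * Vτ s' - Vτ s₀) 0) + c)
      ≤ ∑ a, ∑ s', pol s₀ a * P s₀ a s' *
        (τ' * max (R s₀ a s' + γ * Vτ' s' - Vτ' s₀) 0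
          + (1 - τ') * min (R s₀ a s' + γ * Vτ' s' - Vτ' s₀) 0) := by
    refine Finset.sum_le_sum fun a _ => Finset.sum_le_sum fun s' _ => ?_
    have hw0 : 0 ≤ pol s₀ a * P s₀ a s' := mul_nonneg (hpol0 _ _) (hP0 _ _ _)
    set x := R s₀ a s' + γ * Vτ s' - Vτ s₀ with hxdef
    set y := R s₀ a s' + γ * Vτ' s' - Vτ' s₀ with hydef
    have hgap : (1 - γ) * M ≤ y - x := by
      have := hmax s'
      have : y - x = M - γ * (Vτ s' - Vτ' s') := by rw [hxdef, hydef, hMdef]; ring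
      nlinarith [hmax s']
    have hxy : x ≤ y := by nlinarith
    have hA := g_mono_tau hττ' x
    have hB := g_lip hτ'0 hτ'1 hxy
    have hC : c ≤ m * (y - x) := by
      rw [hcdef]
      exact mul_le_mul_of_nonneg_left hgap hm.le
    have : (τ * max x 0 + (1 - τ) * min x 0) + c
        ≤ τ' * max y 0 + (1 - τ') * min y 0 := by linarith
    exact mul_le_mul_of_nonneg_left this hw0
  -- total weight is one
  have hw : ∑ a, ∑ s', pol s₀ a * P s₀ a s' = 1 := by
    have hin : ∀ a : A, ∑ s', pol s₀ a * P s₀ a s' = pol s₀ a := by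
      intro a; rw [← Finset.mul_sum, hP1, mul_one]
    rw [Finset.sum_congr rfl fun a _ => hin a, hpol1]
  -- expand the left sum
  have expand : ∑ a, ∑ s', pol s₀ a * P s₀ a s' *
        ((τ * max (R s₀ a s' + γ * Vτ s' - Vτ s₀) 0
          + (1 - τ) * min (R s₀ a s' + γ * Vτ s' - Vτ s₀) 0) + c)
      = (∑ a, ∑ s', pol s₀ a * P s₀ a s' *
        (τ * max (R s₀ a s' + γ * Vτ s' - Vτ s₀) 0
          + (1 - τ) * min (R s₀ a s' + γ * Vτ s' - Vτ s₀) 0))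
        + (∑ a, ∑ s', pol s₀ a * P s₀ a s') * c := by
    rw [Finset.sum_mul]
    rw [← Finset.sum_add_distrib]
    refine Finset.sum_congr rfl fun a _ => ?_
    rw [Finset.sum_mul, ← Finset.sum_add_distrib]
    refine Finset.sum_congr rfl fun s' _ => ?_
    ring
  rw [expand, hS1, hw, hS2] at step
  linarith
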